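/- arXiv:0709.3542 — 2 statements merged into one kernel-verified Lean document; each statement's English description precedes it below -/
import Mathlib

section
/- Let $R$ be a commutative ring, $\mathfrak{p}$ a prime ideal, and $a' \in (\mathbb{Z}/p^m\mathbb{Z})^n$ an element not lying in the submodule $A_{h}$. Write $a' = a + b$ with $b \in A_h$ and $a \in A'_h \setminus \{0\}$, where $A'_h$ is the complementary summand. Suppose $\phi : (\mathbb{Z}/p^m\mathbb{Z})^n \to R$ satisfies: (1) $\phi(x+y) \in \phi(x) + \phi(y) + \phi(x)R$ for all $x,y$; (2) $\phi(b) \in \mathfrak{p}$ for all $b \in A_h$; (3) $\phi(a) \notin \mathfrak{p}$ for all nonzero $a \in A'_h$. Then $\phi(a') \notin \mathfrak{p}$. -/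
/-- if `φ : (ℤ/p^m)^n → R` satisfies the formal-group addition law
`φ(x+y) ∈ φ(x) + φ(y) + φ(x)·R`, vanishes mod `𝔭` on `A_h = ⟨e₁,…,e_h⟩`, and is
non-vanishing mod `𝔭` on nonzero elements of the complementary summand
`A'_h = ⟨e_{h+1},…,e_n⟩`, then for `a' = a + b ∉ A_h` with `b ∈ A_h`, `a ∈ A'_h`
nonzero, we have `φ(a') ∉ 𝔭`. -/
theorem stmt13 (R : Type*) [CommRing R] (𝔭 : Ideal R) (h𝔭 : 𝔭.IsPrime)
    (p : ℕ) (hp : p.Prime) (m n h : ℕ) (hm : 1 ≤ m) (hh : h ≤ n)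
    (Ah Ah' : Submodule (ZMod (p ^ m)) (Fin n → ZMod (p ^ m)))
    (hAh : Ah = Submodule.span (ZMod (p ^ m))
      {v | ∃ i : Fin n, (i : ℕ) < h ∧ v = Pi.single i (1 : ZMod (p ^ m))})
    (hAh' : Ah' = Submodule.span (ZMod (p ^ m))
      {v | ∃ i : Fin n, h ≤ (i : ℕ) ∧ v = Pi.single i (1 : ZMod (p ^ m))})
    (φ : (Fin n → ZMod (p ^ m)) → R)
    (hadd : ∀ x y : Fin n → ZMod (p ^ m), ∃ r : R, φ (x + y) = φ x + φ y + φ x * r)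
    (hvan : ∀ b ∈ Ah, φ b ∈ 𝔭)
    (hnonvan : ∀ a ∈ Ah', a ≠ 0 → φ a ∉ 𝔭)
    (a b : Fin n → ZMod (p ^ m)) (hb : b ∈ Ah) (ha : a ∈ Ah') (ha0 : a ≠ 0)
    (hnot : a + b ∉ Ah) :
    φ (a + b) ∉ 𝔭 := by
  intro hmem
  obtain ⟨r, hr⟩ := hadd (a + b) (-b)
  have hab : (a + b) + (-b) = a := by ring
  rw [hab] at hr
  have : φ a ∈ 𝔭 := by
    rw [hr]
    exact Ideal.add_mem _ (Ideal.add_mem _ hmem (hvan _ (neg_mem hb))) (Ideal.mul_mem_right _ _ hmem)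
  exact hnonvan a ha ha0 this
end

section
/- Let $R$ be a commutative ring, let $\mathfrak{p}$ be a prime ideal, and let $x_1, \dots, x_N \in R$. Suppose $\prod_{i=1}^N (T - x_i) \equiv \prod_{j=1}^M (T - y_j)^{e} \pmod{\mathfrak{p}}$ as polynomials over $R/\mathfrak{p}$, with $N = Me$, and exactly one $y_{j_0} \equiv 0 \bmod \mathfrak{p}$ while $y_j \not\equiv 0 \bmod \mathfrak{p}$ for $j \neq j_0$. Then the coefficient of $T^e$ on the left side is congruent modulo $\mathfrak{p}$ to $\pm \prod_{j \neq j_0} y_j^{e}$, which is not in $\mathfrak{p}$. -/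
open Polynomial

set_option maxRecDepth 8000

/-- if `∏_{i=1}^N (T - x_i) ≡ (∏_{j=1}^M (T - y_j))^e (mod 𝔭)` with
`N = M·e`, exactly one `y_{j₀} ≡ 0 mod 𝔭` and `y_j ∉ 𝔭` for `j ≠ j₀`, then the
coefficient of `T^e` on the left is congruent mod `𝔭` to `± ∏_{j ≠ j₀} y_j^e`, and in
particular does not lie in `𝔭`. -/
theorem stmt18 (R : Type*) [CommRing R] (𝔭 : Ideal R) (h𝔭 : 𝔭.IsPrime)
    (N M e : ℕ) (hNMe : N = M * e) (x : Fin N → R) (y : Fin M → R)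
    (hcong : (∏ i, (X - C (x i))).map (Ideal.Quotient.mk 𝔭) =
      ((∏ j, (X - C (y j))).map (Ideal.Quotient.mk 𝔭)) ^ e)
    (j₀ : Fin M) (hj₀ : y j₀ ∈ 𝔭) (hj : ∀ j, j ≠ j₀ → y j ∉ 𝔭) :
    ∃ ε : R, (ε = 1 ∨ ε = -1) ∧
      (∏ i, (X - C (x i))).coeff e - ε * ∏ j ∈ Finset.univ.erase j₀, (y j) ^ e ∈ 𝔭 ∧
      (∏ i, (X - C (x i))).coeff e ∉ 𝔭 := by
  haveI := h𝔭
  set q := Ideal.Quotient.mk 𝔭 with hqdef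
  have hy0 : q (y j₀) = 0 := Ideal.Quotient.eq_zero_iff_mem.mpr hj₀
  set k : ℕ := e * (Finset.univ.erase j₀).card with hk
  have hfac : (∏ j, (X - C (y j))).map q
      = X * ∏ j ∈ Finset.univ.erase j₀, (X - C (q (y j))) := by
    rw [Polynomial.map_prod]
    simp only [Polynomial.map_sub, Polynomial.map_X, Polynomial.map_C]
    rw [← Finset.mul_prod_erase Finset.univ _ (Finset.mem_univ j₀), hy0]
    simp
  have key : q ((∏ i, (X - C (x i))).coeff e)
      = (-1 : R ⧸ 𝔭) ^ k * ∏ j ∈ Finset.univ.erase j₀, (q (y j)) ^ e := by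
    rw [← Polynomial.coeff_map, hcong, hfac, mul_pow]
    have hcoe := Polynomial.coeff_X_pow_mul
      ((∏ j ∈ Finset.univ.erase j₀, (X - C (q (y j)))) ^ e) e 0
    rw [zero_add] at hcoe
    rw [hcoe]
    simp only [Polynomial.coeff_zero_eq_eval_zero, Polynomial.eval_pow,
      Polynomial.eval_prod, Polynomial.eval_sub, Polynomial.eval_X,
      Polynomial.eval_C, zero_sub]
    have hpn : ∏ x ∈ Finset.univ.erase j₀, -q (y x)
        = (-1 : R ⧸ 𝔭) ^ (Finset.univ.erase j₀).card
          * ∏ x ∈ Finset.univ.erase j₀, q (y x) := by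
      rw [← Finset.prod_const (-1 : R ⧸ 𝔭), ← Finset.prod_mul_distrib]
      exact Finset.prod_congr rfl (fun x _ => (neg_one_mul _).symm)
    rw [hpn, mul_pow, ← pow_mul, Finset.prod_pow, hk, Nat.mul_comm]
  refine ⟨(-1 : R) ^ k, neg_one_pow_eq_or R k, ?_, ?_⟩
  · rw [← Ideal.Quotient.eq_zero_iff_mem, map_sub, key, map_mul, map_pow, map_prod]
    simp only [map_pow, map_neg, map_one]
    ring
  · intro hmem
    have h0 : q ((∏ i, (X - C (x i))).coeff e) = 0 :=
      Ideal.Quotient.eq_zero_iff_mem.mpr hmem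
    rw [key] at h0
    haveI : IsDomain (R ⧸ 𝔭) := Ideal.Quotient.isDomain 𝔭
    rcases mul_eq_zero.mp h0 with h1 | h2
    · rcases neg_one_pow_eq_or (R ⧸ 𝔭) k with h | h <;> rw [h] at h1
      · exact one_ne_zero h1
      · exact one_ne_zero (neg_eq_zero.mp h1)
    · obtain ⟨j, hjmem, hjz⟩ := Finset.prod_eq_zero_iff.mp h2
      have : q (y j) = 0 := (pow_eq_zero_iff'.mp hjz).1
      exact hj j (Finset.ne_of_mem_erase hjmem) (Ideal.Quotient.eq_zero_iff_mem.mp this)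
end
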